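/- Uniform decay for Burgers via Cole–Hopf: suppose b(t,x) = 2 h_x(t,x)/h(t,x) where h solves the heat equation with initial data h(1,x) = exp((1/2)∫_{-∞}^x b_0(y)dy) for b_0 ∈ L^1 ∩ L^∞ nonnegative. Then ‖b(t,·)‖_{L^∞} ≤ C ‖b_0‖_{L^1} e^{‖b_0‖_{L^1}} (t-1)^{-1/2} for all t > 1, for a universal constant C. -/

import Mathlib

open MeasureTheory Real

/-- Uniform decay for Burgers via Cole–Hopf: with `h₀(x) = exp((1/2)∫_{-∞}^x b₀)`,
`h(t,x) = ∫ Γ_{t-1}(x-y) h₀(y) dy`, `hₓ(t,x) = ∫ Γ_{t-1}(x-y)(1/2) b₀(y) h₀(y) dy`,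
and `b(t,x) = 2 hₓ(t,x)/h(t,x)`, for `b₀ ∈ L¹ ∩ L^∞` nonnegative one has
`‖b(t,·)‖_{L^∞} ≤ C ‖b₀‖_{L¹} e^{‖b₀‖_{L¹}} (t-1)^{-1/2}` for all `t > 1`. -/
theorem burgers_uniform_decay :
    ∃ C : ℝ, 0 < C ∧ ∀ b₀ : ℝ → ℝ, Integrable b₀ → (∀ x, 0 ≤ b₀ x) →
      (∃ M : ℝ, ∀ x, b₀ x ≤ M) →
      ∀ (h₀ : ℝ → ℝ), (∀ x, h₀ x = Real.exp ((1 / 2) * ∫ y in Set.Iic x, b₀ y)) →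
      ∀ (h hx b : ℝ → ℝ → ℝ),
      (∀ t x, h t x = ∫ y : ℝ, (4 * Real.pi * (t - 1)) ^ (-(1 : ℝ) / 2) *
          Real.exp (-(x - y) ^ 2 / (4 * (t - 1))) * h₀ y) →
      (∀ t x, hx t x = ∫ y : ℝ, (4 * Real.pi * (t - 1)) ^ (-(1 : ℝ) / 2) *
          Real.exp (-(x - y) ^ 2 / (4 * (t - 1))) * ((1 / 2) * b₀ y * h₀ y)) →
      (∀ t x, b t x = 2 * hx t x / h t x) →
      ∀ t : ℝ, 1 < t → ∀ x : ℝ,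
        |b t x| ≤ C * (∫ y : ℝ, b₀ y) * Real.exp (∫ y : ℝ, b₀ y) *
          (t - 1) ^ (-(1 : ℝ) / 2) := by
  refine ⟨1, one_pos, ?_⟩
  intro b₀ hb₀i hb₀nn _ h₀ hh₀ h hx b hh hhx hb t ht x
  have hτ : 0 < t - 1 := by linarith
  set τ : ℝ := t - 1 with hτdef
  set I : ℝ := ∫ y : ℝ, b₀ y with hIdef
  have hInn : 0 ≤ I := integral_nonneg hb₀nn
  -- bounds on the primitive
  have hIic_nn : ∀ y : ℝ, 0 ≤ ∫ z in Set.Iic y, b₀ z :=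
    fun y => setIntegral_nonneg measurableSet_Iic (fun z _ => hb₀nn z)
  have hIic_le : ∀ y : ℝ, (∫ z in Set.Iic y, b₀ z) ≤ I :=
    fun y => setIntegral_le_integral hb₀i (Filter.Eventually.of_forall hb₀nn)
  have hh₀_ge : ∀ y, 1 ≤ h₀ y := fun y => by
    rw [hh₀ y]
    exact Real.one_le_exp (by have := hIic_nn y; linarith)
  have hh₀_le : ∀ y, h₀ y ≤ Real.exp (I / 2) := fun y => by
    rw [hh₀ y]
    exact Real.exp_le_exp.mpr (by have := hIic_le y; linarith)
  have hh₀_nn : ∀ y, 0 ≤ h₀ y := fun y => le_trans zero_le_one (hh₀_ge y)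
  -- measurability of h₀
  have hmono : Monotone (fun y : ℝ => ∫ z in Set.Iic y, b₀ z) := fun y z hyz =>
    setIntegral_mono_set hb₀i.integrableOn (Filter.Eventually.of_forall hb₀nn)
      (HasSubset.Subset.eventuallyLE (Set.Iic_subset_Iic.mpr hyz))
  have hh₀meas : Measurable h₀ := by
    have heq : h₀ = fun y : ℝ => Real.exp ((1 / 2) * ∫ z in Set.Iic y, b₀ z) := funext hh₀
    rw [heq]
    exact Real.measurable_exp.comp (hmono.measurable.const_mul (1 / 2))
  -- the kernel
  set c : ℝ := (4 * π * τ) ^ (-(1 : ℝ) / 2) with hcdef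
  have hcpos : 0 < c := Real.rpow_pos_of_pos (by positivity) _
  set g : ℝ → ℝ := fun y => c * Real.exp (-(x - y) ^ 2 / (4 * τ)) with hgdef
  have hgnn : ∀ y, 0 ≤ g y := fun y => by positivity
  have hgle : ∀ y, g y ≤ c := fun y => by
    have : Real.exp (-(x - y) ^ 2 / (4 * τ)) ≤ 1 := by
      apply Real.exp_le_one_iff.mpr
      have : 0 ≤ (x - y) ^ 2 := sq_nonneg _
      apply div_nonpos_of_nonpos_of_nonneg <;> [linarith; positivity]
    calc c * Real.exp (-(x - y) ^ 2 / (4 * τ)) ≤ c * 1 := by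
          exact mul_le_mul_of_nonneg_left this hcpos.le
      _ = c := mul_one c
  have hb4 : (0:ℝ) < 1 / (4 * τ) := by positivity
  have hgauss0 : Integrable (fun z : ℝ => Real.exp (-(1 / (4 * τ)) * z ^ 2)) :=
    integrable_exp_neg_mul_sq hb4
  have hgi : Integrable g := by
    have h1 : Integrable (fun y : ℝ => Real.exp (-(1 / (4 * τ)) * (y - x) ^ 2)) :=
      hgauss0.comp_sub_right x
    have h2 : Integrable (fun y : ℝ => Real.exp (-(x - y) ^ 2 / (4 * τ))) := by
      apply h1.congr
      filter_upwards with y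
      congr 1
      ring
    exact h2.const_mul c
  have hgint : ∫ y, g y = 1 := by
    have h1 : ∫ y : ℝ, Real.exp (-(x - y) ^ 2 / (4 * τ)) =
        ∫ y : ℝ, Real.exp (-(1 / (4 * τ)) * (y - x) ^ 2) := by
      congr 1
      funext y
      congr 1
      ring
    have h2 : ∫ y : ℝ, Real.exp (-(1 / (4 * τ)) * (y - x) ^ 2) =
        ∫ z : ℝ, Real.exp (-(1 / (4 * τ)) * z ^ 2) :=
      integral_sub_right_eq_self (fun z => Real.exp (-(1 / (4 * τ)) * z ^ 2)) x
    have h3 : ∫ z : ℝ, Real.exp (-(1 / (4 * τ)) * z ^ 2) = Real.sqrt (π / (1 / (4 * τ))) :=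
      integral_gaussian _
    have h4 : π / (1 / (4 * τ)) = 4 * π * τ := by field_simp
    have h5 : c = (Real.sqrt (4 * π * τ))⁻¹ := by
      rw [hcdef, Real.sqrt_eq_rpow, ← Real.rpow_neg (by positivity)]
      norm_num
    rw [hgdef]
    simp only []
    rw [integral_const_mul, h1, h2, h3, h4, h5]
    rw [inv_mul_cancel₀ (Real.sqrt_ne_zero'.mpr (by positivity))]
  -- integrability of g * h₀ and g * (b₀ h₀ / 2)
  have hih : Integrable (fun y => g y * h₀ y) := by
    apply Integrable.mono' (hgi.const_mul (Real.exp (I / 2)))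
      ((hgi.aestronglyMeasurable.mul hh₀meas.aestronglyMeasurable))
    filter_upwards with y
    simp only [Pi.mul_apply, Real.norm_eq_abs]
    rw [abs_of_nonneg (mul_nonneg (hgnn y) (hh₀_nn y))]
    rw [mul_comm (Real.exp (I / 2)) (g y)]
    exact mul_le_mul_of_nonneg_left (hh₀_le y) (hgnn y)
  have hibd : Integrable (fun y => c * ((1 / 2) * Real.exp (I / 2)) * b₀ y) :=
    (hb₀i.const_mul _)
  have hihx : Integrable (fun y => g y * ((1 / 2) * b₀ y * h₀ y)) := by
    apply Integrable.mono' hibd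
      (hgi.aestronglyMeasurable.mul
        (((hb₀i.aestronglyMeasurable.const_mul (1/2)).mul hh₀meas.aestronglyMeasurable)))
    filter_upwards with y
    have hnn : 0 ≤ (1 / 2) * b₀ y * h₀ y := by
      have := hb₀nn y; have := hh₀_nn y; positivity
    simp only [Pi.mul_apply, Real.norm_eq_abs]
    rw [abs_of_nonneg (mul_nonneg (hgnn y) hnn)]
    calc g y * ((1 / 2) * b₀ y * h₀ y) ≤ c * ((1 / 2) * b₀ y * Real.exp (I / 2)) := by
          apply mul_le_mul (hgle y) _ hnn hcpos.le
          have := hb₀nn y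
          exact mul_le_mul_of_nonneg_left (hh₀_le y) (by positivity)
      _ = c * ((1 / 2) * Real.exp (I / 2)) * b₀ y := by ring
  -- lower bound on h
  have hhlow : 1 ≤ h t x := by
    rw [hh t x]
    have : ∫ y, g y ≤ ∫ y, g y * h₀ y := by
      apply integral_mono hgi hih
      intro y
      exact le_mul_of_one_le_right (hgnn y) (hh₀_ge y)
    rw [hgint] at this
    exact le_of_le_of_eq this (by rfl)
  -- upper bound on hx
  have hhxnn : 0 ≤ hx t x := by
    rw [hhx t x]
    apply integral_nonneg
    intro y
    have := hb₀nn y; have := hh₀_nn y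
    have := hgnn y
    simp only [hgdef] at this
    positivity
  have hhxub : hx t x ≤ c * ((1 / 2) * Real.exp (I / 2)) * I := by
    rw [hhx t x]
    show (∫ y : ℝ, g y * ((1 / 2) * b₀ y * h₀ y)) ≤ c * ((1 / 2) * Real.exp (I / 2)) * I
    have h1 : (∫ y : ℝ, g y * ((1 / 2) * b₀ y * h₀ y)) ≤
        ∫ y, c * ((1 / 2) * Real.exp (I / 2)) * b₀ y := by
      apply integral_mono hihx hibd
      intro y
      have hnn : 0 ≤ (1 / 2) * b₀ y * h₀ y := by
        have := hb₀nn y; have := hh₀_nn y; positivity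
      calc g y * ((1 / 2) * b₀ y * h₀ y) ≤ c * ((1 / 2) * b₀ y * Real.exp (I / 2)) := by
            apply mul_le_mul (hgle y) _ hnn hcpos.le
            have := hb₀nn y
            exact mul_le_mul_of_nonneg_left (hh₀_le y) (by positivity)
        _ = c * ((1 / 2) * Real.exp (I / 2)) * b₀ y := by ring
    rw [integral_const_mul] at h1
    exact h1
  -- kernel constant bound : c ≤ τ ^ (-1/2)
  have hcle : c ≤ τ ^ (-(1 : ℝ) / 2) := by
    rw [hcdef]
    have h1 : τ ≤ 4 * π * τ := by nlinarith [Real.pi_gt_three]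
    rw [show (-(1:ℝ)/2) = -(1/2) by norm_num, Real.rpow_neg (by positivity),
      Real.rpow_neg hτ.le]
    apply inv_anti₀ (Real.rpow_pos_of_pos hτ _)
    exact Real.rpow_le_rpow hτ.le h1 (by norm_num)
  -- conclusion
  rw [hb t x, abs_of_nonneg (div_nonneg (by linarith) (by linarith))]
  calc 2 * hx t x / h t x ≤ 2 * hx t x := div_le_self (by linarith) hhlow
    _ ≤ 2 * (c * ((1 / 2) * Real.exp (I / 2)) * I) := by linarith
    _ = c * Real.exp (I / 2) * I := by ring
    _ ≤ τ ^ (-(1 : ℝ) / 2) * Real.exp I * I := by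
        apply mul_le_mul _ le_rfl hInn (by positivity)
        exact mul_le_mul hcle (Real.exp_le_exp.mpr (by linarith)) (Real.exp_pos _).le
          (Real.rpow_pos_of_pos hτ _).le
    _ = 1 * I * Real.exp I * τ ^ (-(1 : ℝ) / 2) := by ring
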